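/- arXiv:1401.6633 — 4 statements merged into one kernel-verified Lean document; each statement's English description precedes it below -/
import Mathlib

section
/- Let M be a finite set of players with n = |M| ≥ 1 and let v : Finset M → ℝ be a coalitional game with v(∅) = 0. Define the Shapley value of player m by φ_m(v) = ∑_{S ⊆ M \ {m}} (|S|!(n − |S| − 1)!/n!) · (v(S ∪ {m}) − v(S)). Then the Shapley value is efficient: ∑_{m ∈ M} φ_m(v) = v(M). -/
/-- The Shapley value of player `m` in the coalitional game `v` on the finite
player set `M`: the weighted average of `m`'s marginal contributions
`v (S ∪ {m}) - v S` over coalitions `S ⊆ M \ {m}`, with weights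
`|S|! (|M| - |S| - 1)! / |M|!`. -/
noncomputable def shapleyValue {M : Type*} [Fintype M] [DecidableEq M]
    (v : Finset M → ℝ) (m : M) : ℝ :=
  ∑ S ∈ ((Finset.univ : Finset M).erase m).powerset,
    ((S.card.factorial : ℝ) *
        ((Fintype.card M - S.card - 1).factorial : ℝ) /
      ((Fintype.card M).factorial : ℝ)) * (v (insert m S) - v S)

/-- Efficiency of the Shapley value: the allocated payoffs of all players sum
to the value of the grand coalition. -/
theorem shapley_efficient {M : Type*} [Fintype M] [DecidableEq M]
    (v : Finset M → ℝ) (hv0 : v ∅ = 0) (hn : 1 ≤ Fintype.card M) :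
    ∑ m : M, shapleyValue v m = v Finset.univ := by

  classical
  set n := Fintype.card M with hn_def
  have key1 : ∑ m : M, ∑ S ∈ ((Finset.univ : Finset M).erase m).powerset,
      ((S.card.factorial : ℝ) * ((n - S.card - 1).factorial : ℝ) / (n.factorial : ℝ))
        * v (insert m S)
      = ∑ T ∈ (Finset.univ : Finset M).powerset, ∑ m ∈ T,
      (((T.card - 1).factorial : ℝ) * ((n - T.card).factorial : ℝ) / (n.factorial : ℝ)) * v T := by
    rw [Finset.sum_sigma', Finset.sum_sigma']
    refine Finset.sum_nbij' (fun p => ⟨insert p.1 p.2, p.1⟩) (fun p => ⟨p.2, p.1.erase p.2⟩)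
      ?_ ?_ ?_ ?_ ?_
    · rintro ⟨m, S⟩ hp
      simp only [Finset.mem_sigma, Finset.mem_powerset, Finset.mem_univ, true_and] at hp ⊢
      exact ⟨Finset.subset_univ _, Finset.mem_insert_self _ _⟩
    · rintro ⟨T, m⟩ hp
      simp only [Finset.mem_sigma, Finset.mem_powerset, Finset.mem_univ, true_and] at hp ⊢
      exact Finset.erase_subset_erase _ (Finset.subset_univ _)
    · rintro ⟨m, S⟩ hp
      simp only [Finset.mem_sigma, Finset.mem_powerset, Finset.mem_univ, true_and] at hp
      have hm : m ∉ S := fun h => (Finset.mem_erase.mp (hp h)).1 rfl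
      simp [Finset.erase_insert hm]
    · rintro ⟨T, m⟩ hp
      simp only [Finset.mem_sigma, Finset.mem_powerset, Finset.mem_univ, true_and] at hp
      simp [Finset.insert_erase hp.2]
    · rintro ⟨m, S⟩ hp
      simp only [Finset.mem_sigma, Finset.mem_powerset, Finset.mem_univ, true_and] at hp
      have hm : m ∉ S := fun h => (Finset.mem_erase.mp (hp h)).1 rfl
      rw [Finset.card_insert_of_notMem hm]
      simp [Nat.sub_sub, Nat.add_comm]
  have key2 : ∑ m : M, ∑ S ∈ ((Finset.univ : Finset M).erase m).powerset,
      ((S.card.factorial : ℝ) * ((n - S.card - 1).factorial : ℝ) / (n.factorial : ℝ)) * v S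
      = ∑ T ∈ (Finset.univ : Finset M).powerset, ∑ m ∈ (Finset.univ : Finset M) \ T,
      ((T.card.factorial : ℝ) * ((n - T.card - 1).factorial : ℝ) / (n.factorial : ℝ)) * v T := by
    rw [Finset.sum_sigma', Finset.sum_sigma']
    refine Finset.sum_nbij' (fun p => ⟨p.2, p.1⟩) (fun p => ⟨p.2, p.1⟩) ?_ ?_ ?_ ?_ ?_
    · rintro ⟨m, S⟩ hp
      simp only [Finset.mem_sigma, Finset.mem_powerset, Finset.mem_univ, true_and,
        Finset.mem_sdiff] at hp ⊢
      exact ⟨Finset.subset_univ _, fun h => (Finset.mem_erase.mp (hp h)).1 rfl⟩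
    · rintro ⟨T, m⟩ hp
      simp only [Finset.mem_sigma, Finset.mem_powerset, Finset.mem_univ, true_and,
        Finset.mem_sdiff] at hp ⊢
      intro x hx
      exact Finset.mem_erase.mpr ⟨fun h => hp.2 (h ▸ hx), Finset.mem_univ _⟩
    · rintro ⟨m, S⟩ _; rfl
    · rintro ⟨T, m⟩ _; rfl
    · rintro ⟨m, S⟩ _; rfl
  have expand : ∑ m : M, shapleyValue v m
      = (∑ m : M, ∑ S ∈ ((Finset.univ : Finset M).erase m).powerset,
          ((S.card.factorial : ℝ) * ((n - S.card - 1).factorial : ℝ) / (n.factorial : ℝ))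
            * v (insert m S))
        - ∑ m : M, ∑ S ∈ ((Finset.univ : Finset M).erase m).powerset,
          ((S.card.factorial : ℝ) * ((n - S.card - 1).factorial : ℝ) / (n.factorial : ℝ)) * v S := by
    rw [← Finset.sum_sub_distrib]
    refine Finset.sum_congr rfl fun m _ => ?_
    rw [shapleyValue, ← Finset.sum_sub_distrib]
    exact Finset.sum_congr rfl fun S _ => by ring
  rw [expand, key1, key2, ← Finset.sum_sub_distrib]
  have huniv : (Finset.univ : Finset M) ∈ (Finset.univ : Finset M).powerset :=
    Finset.mem_powerset_self _
  rw [← Finset.add_sum_erase _ _ huniv]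
  have hzero : ∑ T ∈ ((Finset.univ : Finset M).powerset).erase (Finset.univ : Finset M),
      ((∑ m ∈ T, (((T.card - 1).factorial : ℝ) * ((n - T.card).factorial : ℝ) / (n.factorial : ℝ)) * v T)
        - ∑ m ∈ (Finset.univ : Finset M) \ T,
          ((T.card.factorial : ℝ) * ((n - T.card - 1).factorial : ℝ) / (n.factorial : ℝ)) * v T) = 0 := by
    refine Finset.sum_eq_zero fun T hT => ?_
    obtain ⟨hTne, hTsub⟩ := Finset.mem_erase.mp hT
    rw [Finset.mem_powerset] at hTsub
    rw [Finset.sum_const, Finset.sum_const, nsmul_eq_mul, nsmul_eq_mul,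
      Finset.card_sdiff_of_subset (Finset.subset_univ T)]
    rcases Finset.eq_empty_or_nonempty T with rfl | hTnon
    · simp [hv0]
    · have hcpos : 0 < T.card := Finset.card_pos.mpr hTnon
      have hclt : T.card < n := by
        have := Finset.card_lt_card (lt_of_le_of_ne hTsub (by simpa using hTne))
        simpa [hn_def] using this
      have h1 : (T.card : ℝ) * ((T.card - 1).factorial : ℝ) = (T.card.factorial : ℝ) := by
        exact_mod_cast Nat.mul_factorial_pred (by omega)
      have h2 : ((n - T.card : ℕ) : ℝ) * ((n - T.card - 1).factorial : ℝ)
          = ((n - T.card).factorial : ℝ) := by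
        exact_mod_cast Nat.mul_factorial_pred (by omega)
      have huT : ((Finset.univ : Finset M).card - T.card : ℕ) = n - T.card := by
        rw [Finset.card_univ]
      rw [huT]
      linear_combination (v T * ((n - T.card).factorial : ℝ) / (n.factorial : ℝ)) * h1
        - (v T * (T.card.factorial : ℝ) / (n.factorial : ℝ)) * h2
  rw [hzero, add_zero]
  rw [Finset.sdiff_self, Finset.sum_empty, sub_zero, Finset.sum_const, nsmul_eq_mul,
    Finset.card_univ, ← hn_def]
  have hfac : ((n : ℝ)) * ((n - 1).factorial : ℝ) = (n.factorial : ℝ) := by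
    exact_mod_cast Nat.mul_factorial_pred (by omega)
  have hne : (n.factorial : ℝ) ≠ 0 := Nat.cast_ne_zero.mpr n.factorial_ne_zero
  rw [Nat.sub_self, Nat.factorial_zero]
  field_simp
  linear_combination v Finset.univ * hfac
end

section
/- Let M be a finite set of players with n = |M| ≥ 1 and let v : Finset M → ℝ be a coalitional game with v(∅) = 0 that is superadditive (v(S ∪ T) ≥ v(S) + v(T) for all disjoint S, T ⊆ M). Define the Shapley value of player m by φ_m(v) = ∑_{S ⊆ M \ {m}} (|S|!(n − |S| − 1)!/n!) · (v(S ∪ {m}) − v(S)). Then the Shapley value is individually rational: φ_m(v) ≥ v({m}) for every m ∈ M. -/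
open Finset in
lemma weight_sum {M : Type*} [Fintype M] [DecidableEq M] (hn : 1 ≤ Fintype.card M) (m : M) :
    ∑ S ∈ ((Finset.univ : Finset M).erase m).powerset,
      ((S.card.factorial : ℝ) * ((Fintype.card M - S.card - 1).factorial : ℝ) /
        ((Fintype.card M).factorial : ℝ)) = 1 := by
  set n := Fintype.card M with hnn
  have hcard : ((Finset.univ : Finset M).erase m).card = n - 1 := by
    rw [card_erase_of_mem (mem_univ m), card_univ]
  rw [powerset_card_disjiUnion]; erw [sum_disjiUnion]
  have h1 : ∀ k ∈ range (((Finset.univ : Finset M).erase m).card + 1),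
      ∑ S ∈ powersetCard k ((Finset.univ : Finset M).erase m),
        ((S.card.factorial : ℝ) * ((n - S.card - 1).factorial : ℝ) /
          ((n).factorial : ℝ)) = 1 / n := by
    intro k hk
    rw [mem_range, hcard] at hk
    have hkle : k ≤ n - 1 := Nat.lt_succ_iff.mp hk
    have hsum : ∑ S ∈ powersetCard k ((Finset.univ : Finset M).erase m),
        ((S.card.factorial : ℝ) * ((n - S.card - 1).factorial : ℝ) / ((n).factorial : ℝ))
        = ((n-1).choose k : ℝ) * ((k.factorial : ℝ) * ((n - k - 1).factorial : ℝ) / ((n).factorial : ℝ)) := by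
      rw [sum_congr rfl (fun S hS => ?_), sum_const, card_powersetCard, hcard, nsmul_eq_mul]
      rw [(mem_powersetCard.mp hS).2]
    rw [hsum]
    have hch : ((n-1).choose k : ℝ) * k.factorial * (n - 1 - k).factorial = (n-1).factorial := by
      exact_mod_cast Nat.choose_mul_factorial_mul_factorial hkle
    have hnsub : n - k - 1 = n - 1 - k := by omega
    have hfact : (n.factorial : ℝ) = n * (n-1).factorial := by
      have := Nat.succ_pred_eq_of_pos (show 0 < n from hn)
      calc (n.factorial : ℝ) = (((n-1)+1).factorial : ℝ) := by rw [Nat.sub_add_cancel hn]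
        _ = _ := by
              rw [Nat.factorial_succ]
              have h2 : ((n-1:ℕ):ℝ) + 1 = n := by exact_mod_cast Nat.sub_add_cancel hn
              push_cast
              rw [h2]
    rw [hnsub]
    field_simp [hfact, Nat.factorial_pos, (show (0:ℝ) < n by exact_mod_cast hn)]
    ring_nf
    rw [hch, hfact]; ring
  rw [sum_congr rfl h1, sum_const, card_range, hcard, nsmul_eq_mul]
  have : ((n - 1 + 1 : ℕ) : ℝ) = n := by
    rw [Nat.sub_add_cancel hn]
  rw [this]
  field_simp

/-- Individual rationality of the Shapley value for superadditive games:
each player's allocated payoff is at least the value that player can obtain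
alone. -/
theorem shapley_individually_rational {M : Type*} [Fintype M] [DecidableEq M]
    (v : Finset M → ℝ) (hv0 : v ∅ = 0) (hn : 1 ≤ Fintype.card M)
    (hsuper : ∀ S T : Finset M, Disjoint S T → v (S ∪ T) ≥ v S + v T)
    (m : M) :
    shapleyValue v m ≥ v {m} := by
  have key : shapleyValue v m ≥
      ∑ S ∈ ((Finset.univ : Finset M).erase m).powerset,
        ((S.card.factorial : ℝ) * ((Fintype.card M - S.card - 1).factorial : ℝ) /
          ((Fintype.card M).factorial : ℝ)) * v {m} := by
    apply Finset.sum_le_sum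
    intro S hS
    have hm : m ∉ S := fun h =>
      (Finset.mem_erase.mp (Finset.mem_powerset.mp hS h)).1 rfl
    have hd : Disjoint {m} S := by simpa using hm
    have := hsuper {m} S hd
    have hins : insert m S = {m} ∪ S := by
      rw [Finset.insert_eq]
    have hmarg : v (insert m S) - v S ≥ v {m} := by
      rw [hins]; linarith
    apply mul_le_mul_of_nonneg_left hmarg
    positivity
  calc v {m} = (∑ S ∈ ((Finset.univ : Finset M).erase m).powerset,
        ((S.card.factorial : ℝ) * ((Fintype.card M - S.card - 1).factorial : ℝ) /
          ((Fintype.card M).factorial : ℝ))) * v {m} := by rw [weight_sum hn m, one_mul]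
    _ = ∑ S ∈ ((Finset.univ : Finset M).erase m).powerset,
        ((S.card.factorial : ℝ) * ((Fintype.card M - S.card - 1).factorial : ℝ) /
          ((Fintype.card M).factorial : ℝ)) * v {m} := Finset.sum_mul _ _ _
    _ ≤ shapleyValue v m := key
end

section
/- Let A be a real r × p matrix, c ∈ ℝ^p, M a finite set of players with resource vectors b_i ∈ ℝ^r satisfying b_i ≥ 0 componentwise, and b(S) = ∑_{i ∈ S} b_i. Define the linear production game v(S) = sSup { c · x : x ∈ ℝ^p, x ≥ 0, A x ≤ b(S) } for S ⊆ M, and suppose that for each S the set of objective values is bounded above. Suppose y ∈ ℝ^r satisfies y ≥ 0, Aᵀ y ≥ c, and there exists a grand-coalition-feasible x* (x* ≥ 0, A x* ≤ b(M)) with c · x* = y · b(M) (i.e. y is an optimal dual solution). Then the dual payoff allocation μ_i = y · b_i, i ∈ M, lies in the core of (M, v): it is efficient, ∑_{i ∈ M} μ_i = v(M), and coalitionally rational, ∑_{i ∈ S} μ_i ≥ v(S) for every coalition S ⊆ M. -/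
open Matrix

/-- The set of achievable objective values for a coalition `S` in the linear
production game with technology matrix `A`, objective `c`, and individual
resource vectors `b i`. -/
def LPGameObjSet {M : Type*} [DecidableEq M] (r p : ℕ)
    (A : Matrix (Fin r) (Fin p) ℝ) (c : Fin p → ℝ) (b : M → Fin r → ℝ)
    (S : Finset M) : Set ℝ :=
  {z : ℝ | ∃ x : Fin p → ℝ, (∀ k, 0 ≤ x k) ∧
    (∀ j, A.mulVec x j ≤ ∑ i ∈ S, b i j) ∧ z = c ⬝ᵥ x}

/-- Dual payoff allocation lies in the core: given nonnegative resource
vectors and an optimal dual solution `y` for the grand coalition's linear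
program, the allocation `μ i = y · b i` is efficient and coalitionally
rational for the linear production game `v S = sSup (LPGameObjSet S)`. -/
theorem dual_payoff_in_core {M : Type*} [Fintype M] [DecidableEq M]
    (r p : ℕ)
    (A : Matrix (Fin r) (Fin p) ℝ) (c : Fin p → ℝ) (b : M → Fin r → ℝ)
    (hb_nonneg : ∀ i j, 0 ≤ b i j)
    (hbdd : ∀ S : Finset M, BddAbove (LPGameObjSet r p A c b S))
    (y : Fin r → ℝ)
    (hy_nonneg : ∀ j, 0 ≤ y j)
    (hy_dual : ∀ k, c k ≤ A.transpose.mulVec y k)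
    (xstar : Fin p → ℝ)
    (hx_nonneg : ∀ k, 0 ≤ xstar k)
    (hx_feas : ∀ j, A.mulVec xstar j ≤ ∑ i : M, b i j)
    (hopt : c ⬝ᵥ xstar = y ⬝ᵥ (fun j => ∑ i : M, b i j)) :
    (∑ i : M, y ⬝ᵥ b i) = sSup (LPGameObjSet r p A c b Finset.univ) ∧
      ∀ S : Finset M, (∑ i ∈ S, y ⬝ᵥ b i) ≥ sSup (LPGameObjSet r p A c b S) := by
  -- μ(S) = y ⬝ b(S)
  have hmu : ∀ S : Finset M, (∑ i ∈ S, y ⬝ᵥ b i) = y ⬝ᵥ (fun j => ∑ i ∈ S, b i j) := by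
    intro S
    simp only [dotProduct, Finset.mul_sum]
    rw [Finset.sum_comm]
  -- weak duality: every feasible value ≤ μ(S)
  have hub : ∀ S : Finset M, ∀ z ∈ LPGameObjSet r p A c b S, z ≤ ∑ i ∈ S, y ⬝ᵥ b i := by
    intro S z hz
    obtain ⟨x, hx0, hxf, rfl⟩ := hz
    rw [hmu]
    calc c ⬝ᵥ x ≤ (A.transpose.mulVec y) ⬝ᵥ x := by
          apply Finset.sum_le_sum
          intro k _
          exact mul_le_mul_of_nonneg_right (hy_dual k) (hx0 k)
      _ = y ⬝ᵥ A.mulVec x := by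
          rw [Matrix.dotProduct_mulVec, ← Matrix.vecMul_transpose, Matrix.transpose_transpose]
      _ ≤ y ⬝ᵥ (fun j => ∑ i ∈ S, b i j) := by
          apply Finset.sum_le_sum
          intro j _
          exact mul_le_mul_of_nonneg_left (hxf j) (hy_nonneg j)
  constructor
  · -- efficiency
    have hmem : c ⬝ᵥ xstar ∈ LPGameObjSet r p A c b Finset.univ :=
      ⟨xstar, hx_nonneg, by simpa using hx_feas, rfl⟩
    have h1 : sSup (LPGameObjSet r p A c b Finset.univ) ≤ ∑ i : M, y ⬝ᵥ b i :=
      csSup_le ⟨_, hmem⟩ (hub Finset.univ)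
    have h2 : (∑ i : M, y ⬝ᵥ b i) ≤ sSup (LPGameObjSet r p A c b Finset.univ) := by
      have := le_csSup (hbdd Finset.univ) hmem
      rw [hopt] at this
      rw [hmu]; simpa using this
    linarith
  · -- coalitional rationality
    intro S
    by_cases hne : (LPGameObjSet r p A c b S).Nonempty
    · exact csSup_le hne (hub S)
    · rw [Set.not_nonempty_iff_eq_empty] at hne
      rw [hne, Real.sSup_empty]
      exact Finset.sum_nonneg fun i _ =>
        Finset.sum_nonneg fun j _ => mul_nonneg (hy_nonneg j) (hb_nonneg i j)
end

section
/- Let A be a real r × p matrix, c ∈ ℝ^p, M a finite set of players with resource vectors b_i ∈ ℝ^r satisfying b_i ≥ 0 componentwise, and b(S) = ∑_{i ∈ S} b_i. Define the linear production game v(S) = sSup { c · x : x ∈ ℝ^p, x ≥ 0, A x ≤ b(S) } for S ⊆ M, and suppose that for each S the set of objective values is bounded above. If there exists y ∈ ℝ^r with y ≥ 0, Aᵀ y ≥ c, and a grand-coalition-feasible x* (x* ≥ 0, A x* ≤ b(M)) with c · x* = y · b(M), then the core of the game (M, v) is nonempty: there exists a payoff vector x ∈ ℝ^M with ∑_{i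 ∈ M} x_i = v(M) and ∑_{i ∈ S} x_i ≥ v(S) for every coalition S ⊆ M. -/
open Matrix

/-- Nonemptiness of the core of the linear production game: given nonnegative
resource vectors and an optimal dual solution `y` for the grand coalition's
linear program, there is a payoff vector that is efficient and coalitionally
rational, i.e. the core is nonempty. -/
theorem lp_game_core_nonempty {M : Type*} [Fintype M] [DecidableEq M]
    (r p : ℕ)
    (A : Matrix (Fin r) (Fin p) ℝ) (c : Fin p → ℝ) (b : M → Fin r → ℝ)
    (hb_nonneg : ∀ i j, 0 ≤ b i j)
    (hbdd : ∀ S : Finset M, BddAbove (LPGameObjSet r p A c b S))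
    (y : Fin r → ℝ)
    (hy_nonneg : ∀ j, 0 ≤ y j)
    (hy_dual : ∀ k, c k ≤ A.transpose.mulVec y k)
    (xstar : Fin p → ℝ)
    (hx_nonneg : ∀ k, 0 ≤ xstar k)
    (hx_feas : ∀ j, A.mulVec xstar j ≤ ∑ i : M, b i j)
    (hopt : c ⬝ᵥ xstar = y ⬝ᵥ (fun j => ∑ i : M, b i j)) :
    ∃ x : M → ℝ,
      (∑ i : M, x i) = sSup (LPGameObjSet r p A c b Finset.univ) ∧
        ∀ S : Finset M, (∑ i ∈ S, x i) ≥ sSup (LPGameObjSet r p A c b S) := by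
  -- weak duality against any coalition
  have weak : ∀ (S : Finset M) (z : ℝ), z ∈ LPGameObjSet r p A c b S →
      z ≤ ∑ i ∈ S, y ⬝ᵥ b i := by
    intro S z hz
    obtain ⟨x, hx0, hxf, rfl⟩ := hz
    have h1 : c ⬝ᵥ x ≤ (A.transpose.mulVec y) ⬝ᵥ x := by
      apply Finset.sum_le_sum
      intro k _
      exact mul_le_mul_of_nonneg_right (hy_dual k) (hx0 k)
    have h2 : (A.transpose.mulVec y) ⬝ᵥ x = y ⬝ᵥ A.mulVec x := by
      simp only [dotProduct, Matrix.mulVec, Matrix.transpose_apply,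
        Finset.sum_mul, Finset.mul_sum]
      rw [Finset.sum_comm]
      apply Finset.sum_congr rfl; intro j _
      apply Finset.sum_congr rfl; intro k _
      ring
    have h3 : y ⬝ᵥ A.mulVec x ≤ y ⬝ᵥ (fun j => ∑ i ∈ S, b i j) := by
      apply Finset.sum_le_sum
      intro j _
      exact mul_le_mul_of_nonneg_left (hxf j) (hy_nonneg j)
    have h4 : y ⬝ᵥ (fun j => ∑ i ∈ S, b i j) = ∑ i ∈ S, y ⬝ᵥ b i := by
      simp only [dotProduct, Finset.mul_sum]
      exact Finset.sum_comm
    calc c ⬝ᵥ x ≤ (A.transpose.mulVec y) ⬝ᵥ x := h1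
      _ = y ⬝ᵥ A.mulVec x := h2
      _ ≤ y ⬝ᵥ (fun j => ∑ i ∈ S, b i j) := h3
      _ = ∑ i ∈ S, y ⬝ᵥ b i := h4
  -- each objective set is nonempty (0 is feasible)
  have hne : ∀ S : Finset M, (0:ℝ) ∈ LPGameObjSet r p A c b S := by
    intro S
    refine ⟨0, fun k => le_refl 0, fun j => ?_, by simp⟩
    rw [Matrix.mulVec_zero]
    exact Finset.sum_nonneg fun i _ => hb_nonneg i j
  refine ⟨fun i => y ⬝ᵥ b i, ?_, ?_⟩
  · have h4 : y ⬝ᵥ (fun j => ∑ i : M, b i j) = ∑ i : M, y ⬝ᵥ b i := by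
      simp only [dotProduct, Finset.mul_sum]
      exact Finset.sum_comm
    apply le_antisymm
    · rw [← h4, ← hopt]
      exact le_csSup (hbdd _) ⟨xstar, hx_nonneg, hx_feas, rfl⟩
    · exact csSup_le ⟨0, hne _⟩ (weak Finset.univ)
  · intro S
    exact csSup_le ⟨0, hne _⟩ (weak S)
end
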